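/- For every (s,a) ∈ S × A and every integer t ≥ |W|, the sampling counts of the tracking rule satisfy t·ω_{sa} − |W| ≤ N_{sa}(t) ≤ t·ω_{sa} + 1. -/

import Mathlib

open Finset

/-- Tracking lemma: under the tracking sampling rule for a target allocation `ω`,
the sampling counts satisfy `t ω_{sa} − |W| ≤ N_{sa}(t) ≤ t ω_{sa} + 1` for `t ≥ |W|`. -/
theorem stmt6 {S A : Type*} [Fintype S] [Fintype A] [DecidableEq S] [DecidableEq A]
    [Nonempty S] [Nonempty A]
    (ω : S × A → ℝ) (hω0 : ∀ sa, 0 ≤ ω sa) (hω1 : ∑ sa : S × A, ω sa = 1)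
    -- `W = {(s,a) : ω_{sa} > 0}`, assumed nonempty
    (W : Finset (S × A)) (hW : ∀ sa : S × A, sa ∈ W ↔ 0 < ω sa) (hWne : W.Nonempty)
    -- the samples `A_1, A_2, …` and the counts `N_{sa}(t)`
    (seq : ℕ → S × A)
    (N : S × A → ℕ → ℕ)
    (hN : ∀ sa t, N sa t = ((Finset.Icc 1 t).filter (fun u => seq u = sa)).card)
    -- (i) the first `|W|` samples enumerate `W`, each element sampled exactly once
    (hinit1 : ∀ u ∈ Finset.Icc 1 W.card, seq u ∈ W)
    (hinit2 : ∀ u ∈ Finset.Icc 1 W.card, ∀ v ∈ Finset.Icc 1 W.card, seq u = seq v → u = v)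
    -- (ii) for `t > |W|`, `A_t ∈ W` minimizes `N_{s'a'}(t−1)/ω_{s'a'}` over `W`
    (htrack : ∀ t : ℕ, W.card < t → seq t ∈ W ∧
      ∀ sa ∈ W, (N (seq t) (t - 1) : ℝ) / ω (seq t) ≤ (N sa (t - 1) : ℝ) / ω sa) :
    ∀ sa : S × A, ∀ t : ℕ, W.card ≤ t →
      (t : ℝ) * ω sa - W.card ≤ (N sa t : ℝ) ∧ (N sa t : ℝ) ≤ t * ω sa + 1 := by
  have hω_zero : ∀ sa, sa ∉ W → ω sa = 0 := fun sa h =>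
    le_antisymm (not_lt.1 fun h' => h ((hW sa).2 h')) (hω0 sa)
  have hseqW : ∀ u, 1 ≤ u → seq u ∈ W := by
    intro u hu
    by_cases h : u ≤ W.card
    · exact hinit1 u (Finset.mem_Icc.2 ⟨hu, h⟩)
    · exact (htrack u (not_le.1 h)).1
  have hNout : ∀ sa, sa ∉ W → ∀ t, N sa t = 0 := by
    intro sa hsa t
    rw [hN]
    apply Finset.card_eq_zero.2
    apply Finset.filter_eq_empty_iff.2
    intro u hu heq
    exact hsa (heq ▸ hseqW u (Finset.mem_Icc.1 hu).1)
  have hsum_ω : ∑ sa ∈ W, ω sa = 1 := by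
    rw [← hω1]
    exact Finset.sum_subset (Finset.subset_univ W) (fun x _ hx => hω_zero x hx)
  have hsum_N : ∀ t, ∑ sa ∈ W, N sa t = t := by
    intro t
    calc ∑ sa ∈ W, N sa t = ∑ sa ∈ W, ((Finset.Icc 1 t).filter (fun u => seq u = sa)).card := by
          simp only [hN]
      _ = (Finset.Icc 1 t).card :=
          (Finset.card_eq_sum_card_fiberwise
            (fun u hu => hseqW u (Finset.mem_Icc.1 hu).1)).symm
      _ = t := by simp [Nat.card_Icc]
  have hbase : ∀ sa ∈ W, N sa W.card = 1 := by
    have hle : ∀ sa ∈ W, N sa W.card ≤ 1 := by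
      intro sa _
      rw [hN]
      apply Finset.card_le_one.2
      intro a ha b hb
      obtain ⟨haI, hae⟩ := Finset.mem_filter.1 ha
      obtain ⟨hbI, hbe⟩ := Finset.mem_filter.1 hb
      exact hinit2 a haI b hbI (hae.trans hbe.symm)
    have hsum : ∑ sa ∈ W, N sa W.card = ∑ sa ∈ W, 1 := by
      rw [hsum_N]; simp
    exact fun sa hsa => (Finset.sum_eq_sum_iff_of_le hle).1 hsum sa hsa
  have hrec : ∀ sa t, N sa (t + 1) = N sa t + (if seq (t + 1) = sa then 1 else 0) := by
    intro sa t
    rw [hN, hN]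
    have hins : Finset.Icc 1 (t + 1) = insert (t + 1) (Finset.Icc 1 t) := by
      ext x; simp only [Finset.mem_Icc, Finset.mem_insert]; omega
    have hnm : (t + 1) ∉ (Finset.Icc 1 t).filter (fun u => seq u = sa) := by
      simp [Finset.mem_Icc]
    rw [hins, Finset.filter_insert]
    split_ifs with h
    · rw [Finset.card_insert_of_notMem hnm]
    · omega
  -- upper bound on W
  have UB : ∀ t, W.card ≤ t → ∀ sa ∈ W, (N sa t : ℝ) ≤ t * ω sa + 1 := by
    intro t ht
    induction t, ht using Nat.le_induction with
    | base =>
        intro sa hsa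
        rw [hbase sa hsa]
        have h0 : (0:ℝ) ≤ (W.card : ℝ) * ω sa := mul_nonneg (Nat.cast_nonneg _) (hω0 sa)
        push_cast
        linarith
    | succ t ht ih =>
        intro sa hsa
        have hbW := (htrack (t + 1) (by omega)).1
        have hmin := (htrack (t + 1) (by omega)).2
        simp only [Nat.add_sub_cancel] at hmin
        set b := seq (t + 1) with hb
        have hωb : 0 < ω b := (hW b).1 hbW
        have key : (N b t : ℝ) ≤ t * ω b := by
          by_contra h
          push_neg at h
          have hpos : ∀ x ∈ W, (t : ℝ) * ω x < (N x t : ℝ) := by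
            intro x hx
            have hωx : 0 < ω x := (hW x).1 hx
            have h2 : (t : ℝ) < (N b t : ℝ) / ω b := (lt_div_iff₀ hωb).2 h
            have h3 : (t : ℝ) < (N x t : ℝ) / ω x := lt_of_lt_of_le h2 (hmin x hx)
            exact (lt_div_iff₀ hωx).1 h3
          have h1 : (t : ℝ) * ∑ x ∈ W, ω x < ∑ x ∈ W, (N x t : ℝ) := by
            rw [Finset.mul_sum]
            exact Finset.sum_lt_sum_of_nonempty hWne hpos
          have h4 : ∑ x ∈ W, (N x t : ℝ) = t := by
            exact_mod_cast congrArg (Nat.cast : ℕ → ℝ) (hsum_N t)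
          rw [hsum_ω, h4] at h1
          linarith
        rw [hrec sa t]
        have hω0' := hω0 sa
        by_cases h : b = sa
        · subst h
          simp only [if_pos hb.symm]
          push_cast
          nlinarith
        · simp only [hb.symm ▸ h, if_neg h]
          have := ih sa hsa
          push_cast
          nlinarith
  intro sa t ht
  by_cases hsa : sa ∈ W
  · refine ⟨?_, UB t ht sa hsa⟩
    have hWc : (1 : ℕ) ≤ W.card := Finset.card_pos.2 hWne
    have h1 : (N sa t : ℝ) + ∑ x ∈ W.erase sa, (N x t : ℝ) = t := by
      have h4 : ∑ x ∈ W, (N x t : ℝ) = t := by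
        exact_mod_cast congrArg (Nat.cast : ℕ → ℝ) (hsum_N t)
      exact (Finset.add_sum_erase W (fun x => ((N x t : ℕ) : ℝ)) hsa).trans h4
    have h2 : ∑ x ∈ W.erase sa, (N x t : ℝ) ≤ ∑ x ∈ W.erase sa, ((t : ℝ) * ω x + 1) :=
      Finset.sum_le_sum fun x hx => UB t ht x (Finset.mem_of_mem_erase hx)
    have h3 : ∑ x ∈ W.erase sa, ((t : ℝ) * ω x + 1) = t * (1 - ω sa) + ((W.card : ℝ) - 1) := by
      rw [Finset.sum_add_distrib, ← Finset.mul_sum]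
      have he : ∑ x ∈ W.erase sa, ω x = 1 - ω sa := by
        have := Finset.add_sum_erase W ω hsa
        rw [hsum_ω] at this
        linarith
      rw [he, Finset.sum_const, Finset.card_erase_of_mem hsa, nsmul_eq_mul, mul_one,
        Nat.cast_sub hWc]
      norm_num
    linarith
  · have hz := hNout sa hsa t
    have hωz := hω_zero sa hsa
    have : (0:ℝ) ≤ (W.card : ℝ) := by positivity
    constructor <;> simp [hz, hωz] <;> linarith
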